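/- Let U be a complex Banach space and Φ = (φ, v) a finite-dimensional evolution in U, i.e., the linear span U_Φ of {φ^t v : t ≥ 0} is finite-dimensional. Then Φ is mean ergodic if and only if Φ is stable. -/

import Mathlib

open Filter Finset

section MeanErgodicAux

variable {V : Type*} [NormedAddCommGroup V] [NormedSpace ℂ V]
variable {V₂ : Type*} [NormedAddCommGroup V₂] [NormedSpace ℂ V₂]

/-- Cesàro average of a sequence. -/
noncomputable def avgME (s : ℕ → V) (t : ℕ) : V := (t : ℝ)⁻¹ • ∑ m ∈ Finset.Icc 1 t, s m



lemma avgME_clm (g : V →L[ℂ] V₂) (s : ℕ → V) {x : V}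
    (h : Tendsto (avgME s) atTop (nhds x)) :
    Tendsto (avgME fun t => g (s t)) atTop (nhds (g x)) := by
  have := (g.continuous.tendsto x).comp h
  refine this.congr fun t => ?_
  simp [Function.comp, avgME, g.map_smul_of_tower, map_sum]

lemma avgME_div_tendsto_zero {s : ℕ → V} {x : V}
    (h : Tendsto (avgME s) atTop (nhds x)) :
    Tendsto (fun t : ℕ => (t : ℝ)⁻¹ • s t) atTop (nhds 0) := by
  have hS : ∀ t : ℕ, (t : ℝ) • avgME s t = ∑ m ∈ Finset.Icc 1 t, s m := by
    intro t
    rcases Nat.eq_zero_or_pos t with h0 | h0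
    · subst h0; simp [avgME]
    · rw [avgME, smul_inv_smul₀ (by exact_mod_cast h0.ne')]
  have key : ∀ n : ℕ, ((n + 1 : ℕ) : ℝ)⁻¹ • s (n + 1)
      = avgME s (n + 1) - (((n : ℝ)) / ((n : ℝ) + 1)) • avgME s n := by
    intro n
    have hsum : ∑ m ∈ Finset.Icc 1 (n + 1), s m = (∑ m ∈ Finset.Icc 1 n, s m) + s (n + 1) :=
      Finset.sum_Icc_succ_top (Nat.one_le_iff_ne_zero.2 (Nat.succ_ne_zero n)) s
    have h1 : s (n + 1) = ((n + 1 : ℕ) : ℝ) • avgME s (n + 1) - (n : ℝ) • avgME s n := by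
      rw [hS, hS, hsum]; abel
    rw [h1, smul_sub, smul_smul, smul_smul]
    have hn1 : ((n + 1 : ℕ) : ℝ) ≠ 0 := by positivity
    rw [inv_mul_cancel₀ hn1, one_smul]
    congr 2
    push_cast
    rw [div_eq_inv_mul]
  rw [← tendsto_add_atTop_iff_nat 1]
  have h2 : Tendsto (fun n : ℕ => avgME s (n + 1)) atTop (nhds x) :=
    h.comp (tendsto_add_atTop_nat 1)
  have h3 : Tendsto (fun n : ℕ => ((n : ℝ) / ((n : ℝ) + 1)) • avgME s n) atTop (nhds ((1 : ℝ) • x)) := by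
    refine Tendsto.smul ?_ h
    have := tendsto_natCast_div_add_atTop (𝕜 := ℝ) 1
    simpa using this
  have := h2.sub h3
  rw [one_smul, sub_self] at this
  exact this.congr fun n => (key n).symm

lemma pow_apply_binomial (f : Module.End ℂ V) (μ : ℂ) (w : V) (t : ℕ) :
    (f ^ t) w = ∑ m ∈ Finset.range (t + 1),
      (t.choose m) • (μ ^ (t - m)) • (((f - μ • 1) ^ m) w) := by
  set N := f - μ • (1 : Module.End ℂ V) with hN
  have hf : f = N + μ • 1 := (sub_add_cancel f (μ • 1)).symm
  have hc : Commute N (μ • (1 : Module.End ℂ V)) := (Commute.one_right N).smul_right μ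
  calc (f ^ t) w = ((N + μ • 1) ^ t) w := by rw [← hf]
    _ = _ := by
        rw [hc.add_pow]
        simp [LinearMap.sum_apply, Module.End.mul_apply, smul_pow, Module.End.natCast_apply,
          LinearMap.smul_apply, Module.End.one_apply, smul_comm (μ ^ _)]

lemma pow_apply_eigen (f : Module.End ℂ V) (μ : ℂ) (u : V) (hu : f u = μ • u) (t : ℕ) :
    (f ^ t) u = μ ^ t • u := by
  induction t with
  | zero => simp
  | succ n ih => rw [pow_succ', Module.End.mul_apply, ih, map_smul, hu, smul_smul, mul_comm (μ ^ _) μ, ← pow_succ']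

lemma pow_apply_jordan (f : Module.End ℂ V) (μ : ℂ) (z u : V)
    (hz : f z = μ • z + u) (hu : f u = μ • u) (t : ℕ) :
    (f ^ (t + 1)) z = μ ^ (t + 1) • z + (((t : ℂ) + 1) * μ ^ t) • u := by
  induction t with
  | zero => simpa using hz
  | succ n ih =>
      rw [pow_succ', Module.End.mul_apply, ih]
      rw [map_add, map_smul, map_smul, hz, hu]
      rw [smul_add, smul_smul, smul_smul, ← pow_succ]
      rw [add_assoc]
      congr 1
      rw [← add_smul]
      congr 1
      push_cast
      ring

lemma choose_mul_geom_tendsto_zero {r : ℝ} (h0 : 0 ≤ r) (h1 : r < 1) (j : ℕ) :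
    Tendsto (fun t : ℕ => (t.choose j : ℝ) * r ^ (t - j)) atTop (nhds 0) := by
  have hs : Summable (fun n : ℕ => ((n + j).choose j : ℝ) * r ^ n) :=
    summable_choose_mul_geometric_of_norm_lt_one j (by rwa [Real.norm_eq_abs, abs_of_nonneg h0])
  have := hs.tendsto_atTop_zero
  rw [← tendsto_add_atTop_iff_nat j]
  refine this.congr fun n => ?_
  simp [Nat.add_sub_cancel]

lemma orbit_tendsto_zero (f : Module.End ℂ V) {μ : ℂ} {w : V} {k : ℕ}
    (hk : ((f - μ • 1) ^ k) w = 0) (hμ : ‖μ‖ < 1) :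
    Tendsto (fun t => (f ^ t) w) atTop (nhds 0) := by
  have key : ∀ t : ℕ, k ≤ t + 1 → (f ^ t) w
      = ∑ m ∈ Finset.range k, (t.choose m) • (μ ^ (t - m)) • (((f - μ • 1) ^ m) w) := by
    intro t ht
    rw [pow_apply_binomial f μ w t]
    refine (Finset.sum_subset (Finset.range_subset_range.2 ht) fun m _ hm => ?_).symm
    rw [Finset.mem_range, not_lt] at hm
    have : ((f - μ • 1) ^ m) w = 0 := by
      rw [show m = (m - k) + k by omega, pow_add, Module.End.mul_apply, hk, map_zero]
    rw [this, smul_zero, smul_zero]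
  have hbound : Tendsto (fun t : ℕ => ∑ m ∈ Finset.range k,
      (t.choose m : ℝ) * ‖μ‖ ^ (t - m) * ‖((f - μ • 1) ^ m) w‖) atTop (nhds 0) := by
    have : Tendsto (fun t : ℕ => ∑ m ∈ Finset.range k,
        ((t.choose m : ℝ) * ‖μ‖ ^ (t - m)) * ‖((f - μ • 1) ^ m) w‖) atTop
        (nhds (∑ m ∈ Finset.range k, (0 : ℝ) * ‖((f - μ • 1) ^ m) w‖)) := by
      refine tendsto_finset_sum _ fun m _ => ?_
      exact (choose_mul_geom_tendsto_zero (norm_nonneg μ) hμ m).mul_const _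
    simpa using this
  refine squeeze_zero_norm' ?_ hbound
  filter_upwards [Filter.eventually_ge_atTop k] with t ht
  rw [key t (le_trans ht (Nat.le_succ t))]
  refine (norm_sum_le _ _).trans ?_
  refine Finset.sum_le_sum fun m _ => ?_
  rw [← Nat.cast_smul_eq_nsmul ℝ (t.choose m), norm_smul, norm_smul, norm_pow, Real.norm_natCast]
  exact le_of_eq (by ring)

lemma avgME_tendsto_of_tendsto {s : ℕ → V} {l : V} (h : Tendsto s atTop (nhds l)) :
    Tendsto (avgME s) atTop (nhds l) := by
  have h1 : Tendsto (fun i : ℕ => s (1 + i)) atTop (nhds l) :=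
    (h.comp (tendsto_add_atTop_nat 1)).congr fun i => by simp [Function.comp, Nat.add_comm 1 i]
  have := h1.cesaro_smul
  refine this.congr fun n => ?_
  rw [avgME, ← Finset.Ico_add_one_right_eq_Icc, Finset.sum_Ico_eq_sum_range]
  simp

lemma avgME_geom_tendsto_zero {μ : ℂ} (hμ : ‖μ‖ ≤ 1) (hμ1 : μ ≠ 1) (w : V) :
    Tendsto (avgME fun t : ℕ => μ ^ t • w) atTop (nhds 0) := by
  have hgeo : ∀ t : ℕ, ‖∑ m ∈ Finset.Icc 1 t, μ ^ m‖ ≤ 2 / ‖μ - 1‖ + 1 := by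
    intro t
    have hsum : ∑ m ∈ Finset.Icc 1 t, μ ^ m = (μ ^ (t + 1) - 1) / (μ - 1) - 1 := by
      have h0 : ∑ m ∈ Finset.range (t + 1), μ ^ m = (μ ^ (t + 1) - 1) / (μ - 1) :=
        geom_sum_eq hμ1 (t + 1)
      have h1 : ∑ m ∈ Finset.range (t + 1), μ ^ m = 1 + ∑ m ∈ Finset.Icc 1 t, μ ^ m := by
        rw [Finset.range_eq_Ico, Finset.sum_eq_sum_Ico_succ_bot (Nat.succ_pos t)]
        rw [pow_zero, Nat.succ_eq_add_one, Finset.Ico_add_one_right_eq_Icc]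
      rw [h1] at h0
      rw [← h0]; ring
    rw [hsum]
    refine (norm_sub_le _ _).trans ?_
    rw [norm_one, norm_div]
    gcongr
    refine (norm_sub_le _ _).trans ?_
    rw [norm_one, norm_pow]
    have : ‖μ‖ ^ (t + 1) ≤ 1 := pow_le_one₀ (norm_nonneg μ) hμ
    linarith
  have hμ1' : (0:ℝ) < ‖μ - 1‖ := by
    rw [norm_pos_iff]; exact sub_ne_zero.2 hμ1
  refine squeeze_zero_norm' (a := fun t : ℕ => (t : ℝ)⁻¹ * ((2 / ‖μ - 1‖ + 1) * ‖w‖)) ?_ ?_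
  · filter_upwards [Filter.eventually_ge_atTop 1] with t ht
    rw [avgME]
    have : ∑ m ∈ Finset.Icc 1 t, μ ^ m • w = (∑ m ∈ Finset.Icc 1 t, μ ^ m) • w := by
      rw [Finset.sum_smul]
    rw [this, norm_smul, norm_smul, Real.norm_eq_abs, abs_of_nonneg (by positivity)]
    exact mul_le_mul_of_nonneg_left
      (mul_le_mul_of_nonneg_right (hgeo t) (norm_nonneg w)) (by positivity)
  · have : Tendsto (fun t : ℕ => (t : ℝ)⁻¹) atTop (nhds 0) := tendsto_inv_atTop_zero.comp
      tendsto_natCast_atTop_atTop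
    simpa using this.mul_const _

lemma comm_pow_apply (f : Module.End ℂ V) (μ : ℂ) (j t : ℕ) (w : V) :
    ((f - μ • 1) ^ j) ((f ^ t) w) = (f ^ t) (((f - μ • 1) ^ j) w) := by
  have hc : Commute ((f - μ • 1) ^ j) (f ^ t) :=
    (((Commute.refl f).sub_left ((Commute.one_left f).smul_left μ))).pow_pow j t
  rw [← Module.End.mul_apply, hc.eq, Module.End.mul_apply]

lemma ofReal_inv_succ_mul (s : ℕ) (μ : ℂ) (u : V) :
    (((s : ℝ) + 1)⁻¹ : ℝ) • ((((s : ℂ) + 1) * μ ^ s) • u) = μ ^ s • u := by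
  have key : ∀ (r : ℝ) (x : V), r • x = ((r : ℂ)) • x := fun r x => by
    rw [← Complex.coe_algebraMap, IsScalarTower.algebraMap_smul]
  rw [key, smul_smul]
  have h2 : ((((s : ℝ) + 1)⁻¹ : ℝ) : ℂ) = ((s : ℂ) + 1)⁻¹ := by push_cast; ring
  rw [h2, ← mul_assoc, inv_mul_cancel₀ (Nat.cast_add_one_ne_zero s), one_mul]

/-- From an eigenvector with bounded scaled orbit information: `‖μ‖ ≤ 1`. -/
lemma norm_le_one_of_tendsto {μ : ℂ} {u : V} (hu0 : u ≠ 0)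
    (h : Tendsto (fun t : ℕ => (t : ℝ)⁻¹ • (μ ^ t • u)) atTop (nhds 0)) : ‖μ‖ ≤ 1 := by
  by_contra hgt
  push_neg at hgt
  have hnorm : Tendsto (fun t : ℕ => ‖(t : ℝ)⁻¹ • (μ ^ t • u)‖) atTop (nhds 0) := by
    simpa using h.norm
  have hev : ∀ᶠ t : ℕ in atTop, (‖μ‖ - 1) * ‖u‖ ≤ ‖(t : ℝ)⁻¹ • (μ ^ t • u)‖ := by
    filter_upwards [Filter.eventually_ge_atTop 1] with t ht
    rw [norm_smul, norm_smul, norm_pow, Real.norm_eq_abs, abs_of_nonneg (by positivity)]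
    have ht0 : (0 : ℝ) < (t : ℝ) := by exact_mod_cast ht
    have hpow : (t : ℝ) * (‖μ‖ - 1) ≤ ‖μ‖ ^ t := by
      have h1 : 1 + (t : ℝ) * (‖μ‖ - 1) ≤ (1 + (‖μ‖ - 1)) ^ t :=
        one_add_mul_le_pow (by linarith) t
      have : (t : ℝ) * (‖μ‖ - 1) ≤ 1 + (t : ℝ) * (‖μ‖ - 1) := by linarith
      calc (t : ℝ) * (‖μ‖ - 1) ≤ 1 + (t : ℝ) * (‖μ‖ - 1) := this
        _ ≤ (1 + (‖μ‖ - 1)) ^ t := h1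
        _ = ‖μ‖ ^ t := by norm_num
    calc (‖μ‖ - 1) * ‖u‖ = ((t : ℝ)⁻¹ * ((t : ℝ) * (‖μ‖ - 1))) * ‖u‖ := by
          field_simp
      _ ≤ ((t : ℝ)⁻¹ * ‖μ‖ ^ t) * ‖u‖ := by
          have := mul_le_mul_of_nonneg_left hpow (le_of_lt (inv_pos.2 ht0))
          exact mul_le_mul_of_nonneg_right this (norm_nonneg u)
      _ = (t : ℝ)⁻¹ * (‖μ‖ ^ t * ‖u‖) := by ring
  have hle : (‖μ‖ - 1) * ‖u‖ ≤ 0 := ge_of_tendsto hnorm hev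
  have : 0 < (‖μ‖ - 1) * ‖u‖ := by
    apply mul_pos (by linarith) (norm_pos_iff.2 hu0)
  linarith

lemma nice_of_cesaro [FiniteDimensional ℂ V] (f : Module.End ℂ V) {μ : ℂ} {w : V} {k : ℕ}
    (hk : ((f - μ • 1) ^ k) w = 0) {x : V}
    (h : Tendsto (avgME fun t => (f ^ t) w) atTop (nhds x)) :
    w = 0 ∨ ‖μ‖ < 1 ∨ ((f - μ • 1) w = 0 ∧ ‖μ‖ ≤ 1) := by
  by_cases h1 : ‖μ‖ < 1
  · exact Or.inr (Or.inl h1)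
  push_neg at h1
  classical
  have hex : ∃ n : ℕ, ((f - μ • 1) ^ n) w = 0 := ⟨k, hk⟩
  set d := Nat.find hex with hdd
  have hd : ((f - μ • 1) ^ d) w = 0 := Nat.find_spec hex
  rcases Nat.eq_zero_or_pos d with hd0 | hd0
  · left; rw [hd0, pow_zero, Module.End.one_apply] at hd; exact hd
  right; right
  set N := f - μ • (1 : Module.End ℂ V) with hN
  set u := (N ^ (d - 1)) w with hu
  have hu0 : u ≠ 0 := Nat.find_min hex (Nat.sub_lt hd0 Nat.one_pos)
  have hNu : N u = 0 := by
    rw [hu, ← Module.End.mul_apply, ← pow_succ']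
    have hd1 : d - 1 + 1 = d := Nat.succ_pred_eq_of_pos hd0
    rw [hd1]
    exact hd
  have hfu : f u = μ • u := by
    have : N u = f u - μ • u := by
      rw [hN]; simp [LinearMap.sub_apply, LinearMap.smul_apply]
    rw [this] at hNu
    linear_combination (norm := module) hNu
  -- Cesàro convergence of the orbit of u
  have horbu : Tendsto (avgME fun t => (f ^ t) u) atTop
      (nhds ((LinearMap.toContinuousLinearMap (N ^ (d - 1))) x)) := by
    have := avgME_clm (LinearMap.toContinuousLinearMap (N ^ (d - 1))) _ h
    refine this.congr fun t => ?_
    unfold avgME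
    congr 1
    refine Finset.sum_congr rfl fun m _ => ?_
    simp only [LinearMap.coe_toContinuousLinearMap']
    exact comm_pow_apply f μ (d - 1) m w
  have hμle : ‖μ‖ ≤ 1 := by
    refine norm_le_one_of_tendsto hu0 ?_
    have := avgME_div_tendsto_zero horbu
    refine this.congr fun t => ?_
    rw [pow_apply_eigen f μ u hfu t]
  refine ⟨?_, hμle⟩
  -- now show N w = 0, i.e. d ≤ 1
  rcases Nat.lt_or_ge d 2 with hd2 | hd2
  · have : d = 1 := by omega
    rw [← hd, this, pow_one]
  exfalso
  set z := (N ^ (d - 2)) w with hz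
  have hu_eq : u = N z := by
    rw [hu, hz, ← Module.End.mul_apply, ← pow_succ']
    have h21 : d - 2 + 1 = d - 1 := by omega
    rw [h21]
  have hfz : f z = μ • z + u := by
    have hNz : N z = f z - μ • z := by
      rw [hN]; simp [LinearMap.sub_apply, LinearMap.smul_apply]
    rw [hu_eq, hNz]
    abel
  have horbz : Tendsto (avgME fun t => (f ^ t) z) atTop
      (nhds ((LinearMap.toContinuousLinearMap (N ^ (d - 2))) x)) := by
    have := avgME_clm (LinearMap.toContinuousLinearMap (N ^ (d - 2))) _ h
    refine this.congr fun t => ?_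
    unfold avgME
    congr 1
    refine Finset.sum_congr rfl fun m _ => ?_
    simp only [LinearMap.coe_toContinuousLinearMap']
    exact comm_pow_apply f μ (d - 2) m w
  have hdiv := avgME_div_tendsto_zero horbz
  have hshift : Tendsto (fun s : ℕ => (((s + 1 : ℕ) : ℝ))⁻¹ • (f ^ (s + 1)) z)
      atTop (nhds 0) := hdiv.comp (tendsto_add_atTop_nat 1)
  have hterm2 : Tendsto (fun s : ℕ => (((s : ℝ) + 1)⁻¹ : ℝ) • (μ ^ (s + 1) • z))
      atTop (nhds 0) := by
    refine squeeze_zero_norm (a := fun s : ℕ => ((s : ℝ) + 1)⁻¹ * ‖z‖) (fun s => ?_) ?_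
    · rw [norm_smul, norm_smul, norm_pow, Real.norm_eq_abs, abs_of_nonneg (by positivity)]
      have : ‖μ‖ ^ (s + 1) ≤ 1 := pow_le_one₀ (norm_nonneg μ) hμle
      have hs0 : (0:ℝ) ≤ ((s : ℝ) + 1)⁻¹ := by positivity
      calc ((s : ℝ) + 1)⁻¹ * (‖μ‖ ^ (s+1) * ‖z‖)
          ≤ ((s : ℝ) + 1)⁻¹ * (1 * ‖z‖) := by
            refine mul_le_mul_of_nonneg_left ?_ hs0
            exact mul_le_mul_of_nonneg_right this (norm_nonneg z)
        _ = ((s : ℝ) + 1)⁻¹ * ‖z‖ := by ring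
    · have h0 : Tendsto (fun s : ℕ => ((s : ℝ) + 1)⁻¹) atTop (nhds 0) := by
        refine tendsto_inv_atTop_zero.comp ?_
        exact tendsto_atTop_add_const_right _ 1 tendsto_natCast_atTop_atTop
      simpa using h0.mul_const ‖z‖
  have hμu : Tendsto (fun s : ℕ => μ ^ s • u) atTop (nhds 0) := by
    have key : ∀ s : ℕ, μ ^ s • u
        = (((s + 1 : ℕ) : ℝ))⁻¹ • (f ^ (s + 1)) z
          - (((s : ℝ) + 1)⁻¹ : ℝ) • (μ ^ (s + 1) • z) := by
      intro s
      rw [pow_apply_jordan f μ z u hfz hfu s, smul_add]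
      push_cast
      rw [ofReal_inv_succ_mul s μ u]
      abel
    have := hshift.sub hterm2
    rw [sub_zero] at this
    exact this.congr fun s => (key s).symm
  -- contradiction: ‖μ ^ s • u‖ ≥ ‖u‖ since ‖μ‖ = 1
  have hge1 : ∀ s : ℕ, ‖u‖ ≤ ‖μ ^ s • u‖ := by
    intro s
    rw [norm_smul, norm_pow]
    have : (1:ℝ) ≤ ‖μ‖ ^ s := one_le_pow₀ h1
    nlinarith [norm_nonneg u]
  have : ‖u‖ ≤ 0 := ge_of_tendsto (by simpa using hμu.norm) (Eventually.of_forall hge1)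
  exact hu0 (norm_le_zero_iff.1 this)

lemma nice_of_bounded [FiniteDimensional ℂ V] (f : Module.End ℂ V) {μ : ℂ} {w : V} {k : ℕ}
    (hk : ((f - μ • 1) ^ k) w = 0) {C : ℝ}
    (hC : ∀ t : ℕ, ‖(f ^ t) w‖ ≤ C) :
    w = 0 ∨ ‖μ‖ < 1 ∨ ((f - μ • 1) w = 0 ∧ ‖μ‖ ≤ 1) := by
  by_cases h1 : ‖μ‖ < 1
  · exact Or.inr (Or.inl h1)
  push_neg at h1
  classical
  have hex : ∃ n : ℕ, ((f - μ • 1) ^ n) w = 0 := ⟨k, hk⟩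
  set d := Nat.find hex with hdd
  have hd : ((f - μ • 1) ^ d) w = 0 := Nat.find_spec hex
  rcases Nat.eq_zero_or_pos d with hd0 | hd0
  · left; rw [hd0, pow_zero, Module.End.one_apply] at hd; exact hd
  right; right
  set N := f - μ • (1 : Module.End ℂ V) with hN
  set u := (N ^ (d - 1)) w with hu
  have hu0 : u ≠ 0 := Nat.find_min hex (Nat.sub_lt hd0 Nat.one_pos)
  have hupos : (0:ℝ) < ‖u‖ := norm_pos_iff.2 hu0
  have hNu : N u = 0 := by
    rw [hu, ← Module.End.mul_apply, ← pow_succ']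
    have hd1 : d - 1 + 1 = d := Nat.succ_pred_eq_of_pos hd0
    rw [hd1]; exact hd
  have hfu : f u = μ • u := by
    have : N u = f u - μ • u := by
      rw [hN]; simp [LinearMap.sub_apply, LinearMap.smul_apply]
    rw [this] at hNu
    linear_combination (norm := module) hNu
  -- orbit of u is bounded
  have horbu : ∀ t : ℕ, ‖μ‖ ^ t * ‖u‖ ≤ ‖LinearMap.toContinuousLinearMap (N ^ (d - 1))‖ * C := by
    intro t
    set g := LinearMap.toContinuousLinearMap (N ^ (d - 1)) with hg
    have h2 : (f ^ t) u = g ((f ^ t) w) := by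
      simp only [hg, LinearMap.coe_toContinuousLinearMap']
      rw [hu, comm_pow_apply]
    have h3 : ‖(f ^ t) u‖ = ‖μ‖ ^ t * ‖u‖ := by
      rw [pow_apply_eigen f μ u hfu t, norm_smul, norm_pow]
    rw [← h3, h2]
    calc ‖g ((f ^ t) w)‖ ≤ ‖g‖ * ‖(f ^ t) w‖ := g.le_opNorm _
      _ ≤ ‖g‖ * C := mul_le_mul_of_nonneg_left (hC t) (norm_nonneg g)
  set D := ‖LinearMap.toContinuousLinearMap (N ^ (d - 1))‖ * C with hD
  have hμle : ‖μ‖ ≤ 1 := by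
    by_contra hgt
    push_neg at hgt
    obtain ⟨n, hn⟩ := exists_nat_gt (D / ((‖μ‖ - 1) * ‖u‖))
    have hpos : (0:ℝ) < (‖μ‖ - 1) * ‖u‖ := mul_pos (by linarith) hupos
    have h4 : D < (n : ℝ) * ((‖μ‖ - 1) * ‖u‖) := by
      rwa [div_lt_iff₀ hpos] at hn
    have h5 : 1 + (n : ℝ) * (‖μ‖ - 1) ≤ (1 + (‖μ‖ - 1)) ^ n := one_add_mul_le_pow (by linarith) n
    have h6 : (1 + (‖μ‖ - 1)) ^ n = ‖μ‖ ^ n := by norm_num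
    have h7 := horbu n
    nlinarith [norm_nonneg u]
  refine ⟨?_, hμle⟩
  rcases Nat.lt_or_ge d 2 with hd2 | hd2
  · have : d = 1 := by omega
    rw [← hd, this, pow_one]
  exfalso
  set z := (N ^ (d - 2)) w with hz
  have hu_eq : u = N z := by
    rw [hu, hz, ← Module.End.mul_apply, ← pow_succ']
    have h21 : d - 2 + 1 = d - 1 := by omega
    rw [h21]
  have hfz : f z = μ • z + u := by
    have hNz : N z = f z - μ • z := by
      rw [hN]; simp [LinearMap.sub_apply, LinearMap.smul_apply]
    rw [hu_eq, hNz]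
    abel
  set g2 := LinearMap.toContinuousLinearMap (N ^ (d - 2)) with hg2
  have horbz : ∀ t : ℕ, ‖(f ^ t) z‖ ≤ ‖g2‖ * C := by
    intro t
    have h2 : (f ^ t) z = g2 ((f ^ t) w) := by
      simp only [hg2, LinearMap.coe_toContinuousLinearMap']
      rw [hz, comm_pow_apply]
    rw [h2]
    calc ‖g2 ((f ^ t) w)‖ ≤ ‖g2‖ * ‖(f ^ t) w‖ := g2.le_opNorm _
      _ ≤ ‖g2‖ * C := mul_le_mul_of_nonneg_left (hC t) (norm_nonneg g2)
  obtain ⟨s, hs⟩ := exists_nat_gt ((‖g2‖ * C + ‖z‖) / ‖u‖)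
  have h8 := horbz (s + 1)
  have h9 : (f ^ (s + 1)) z = μ ^ (s + 1) • z + (((s : ℂ) + 1) * μ ^ s) • u :=
    pow_apply_jordan f μ z u hfz hfu s
  have h10 : ((s : ℝ) + 1) * ‖u‖ ≤ ‖(f ^ (s + 1)) z‖ + ‖z‖ := by
    have h11 : ‖(((s : ℂ) + 1) * μ ^ s) • u‖ = ((s:ℝ) + 1) * (‖μ‖ ^ s * ‖u‖) := by
      rw [norm_smul, norm_mul, norm_pow]
      have : ‖(s : ℂ) + 1‖ = (s : ℝ) + 1 := by
        have : ((s : ℂ) + 1) = ((s + 1 : ℕ) : ℂ) := by push_cast; ring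
        rw [this, Complex.norm_natCast]
        push_cast; ring
      rw [this, mul_assoc]
    have h12 : (((s : ℂ) + 1) * μ ^ s) • u = (f ^ (s + 1)) z - μ ^ (s + 1) • z := by
      rw [h9]; abel
    have h13 : ‖μ ^ (s + 1) • z‖ ≤ ‖z‖ := by
      rw [norm_smul, norm_pow]
      have : ‖μ‖ ^ (s + 1) ≤ 1 := pow_le_one₀ (norm_nonneg μ) hμle
      nlinarith [norm_nonneg z]
    have h14 : ‖(((s : ℂ) + 1) * μ ^ s) • u‖ ≤ ‖(f ^ (s + 1)) z‖ + ‖z‖ := by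
      rw [h12]
      exact (norm_sub_le _ _).trans (by linarith)
    have h15 : (1:ℝ) ≤ ‖μ‖ ^ s := one_le_pow₀ h1
    have h17 : ((s:ℝ)+1) * (1 * ‖u‖) ≤ ((s:ℝ)+1) * (‖μ‖ ^ s * ‖u‖) :=
      mul_le_mul_of_nonneg_left (mul_le_mul_of_nonneg_right h15 (norm_nonneg u))
        (by positivity)
    rw [one_mul] at h17
    linarith [h11 ▸ h14]
  have h16 : (‖g2‖ * C + ‖z‖) < ((s:ℝ) + 1) * ‖u‖ := by
    rw [div_lt_iff₀ hupos] at hs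
    nlinarith
  linarith

lemma cesaro_and_bounded_of_nice (f : Module.End ℂ V) {μ : ℂ} {w : V} {k : ℕ}
    (hk : ((f - μ • 1) ^ k) w = 0)
    (hnice : w = 0 ∨ ‖μ‖ < 1 ∨ ((f - μ • 1) w = 0 ∧ ‖μ‖ ≤ 1)) :
    (∃ x : V, Tendsto (avgME fun t => (f ^ t) w) atTop (nhds x))
      ∧ ∃ C : ℝ, ∀ t : ℕ, ‖(f ^ t) w‖ ≤ C := by
  rcases hnice with h0 | hlt | ⟨hNw, hle⟩
  · subst h0
    constructor
    · exact ⟨0, avgME_tendsto_of_tendsto (by simpa using tendsto_const_nhds (x := (0:V)))⟩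
    · exact ⟨0, fun t => by simp⟩
  · have h0 := orbit_tendsto_zero f hk hlt
    refine ⟨⟨0, avgME_tendsto_of_tendsto h0⟩, ?_⟩
    have hb : BddAbove (Set.range fun t : ℕ => ‖(f ^ t) w‖) := by
      have := h0.norm
      exact this.bddAbove_range
    obtain ⟨C, hC⟩ := hb
    exact ⟨C, fun t => hC ⟨t, rfl⟩⟩
  · have hfw : f w = μ • w := by
      have : (f - μ • 1) w = f w - μ • w := by
        simp [LinearMap.sub_apply, LinearMap.smul_apply]
      rw [this] at hNw
      linear_combination (norm := module) hNw
    have horb : ∀ t : ℕ, (f ^ t) w = μ ^ t • w := pow_apply_eigen f μ w hfw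
    constructor
    · by_cases hμ1 : μ = 1
      · refine ⟨w, avgME_tendsto_of_tendsto ?_⟩
        have : ∀ t : ℕ, (f ^ t) w = w := fun t => by
          rw [horb t, hμ1, one_pow, one_smul]
        simpa [this] using tendsto_const_nhds (x := w)
      · refine ⟨0, ?_⟩
        have := avgME_geom_tendsto_zero hle hμ1 w
        refine this.congr fun t => ?_
        unfold avgME
        congr 1
        exact Finset.sum_congr rfl fun m _ => (horb m).symm
    · refine ⟨‖w‖, fun t => ?_⟩
      rw [horb t, norm_smul, norm_pow]
      have : ‖μ‖ ^ t ≤ 1 := pow_le_one₀ (norm_nonneg μ) hle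
      nlinarith [norm_nonneg w]

lemma exists_proj [FiniteDimensional ℂ V] (f : Module.End ℂ V) (μ : ℂ) :
    ∃ π : V →L[ℂ] V, (∀ x ∈ f.maxGenEigenspace μ, π x = x) ∧
      (∀ ν : ℂ, ν ≠ μ → ∀ x ∈ f.maxGenEigenspace ν, π x = 0) ∧
      (∀ x : V, π (f x) = f (π x)) := by
  classical
  set p := f.maxGenEigenspace μ with hp
  set q := ⨆ ν : ℂ, ⨆ _ : ν ≠ μ, f.maxGenEigenspace ν with hq
  have hdis : Disjoint p q := f.independent_maxGenEigenspace μ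
  have hcod : p ⊔ q = ⊤ := by
    refine top_unique ?_
    rw [← Module.End.iSup_maxGenEigenspace_eq_top f]
    refine iSup_le fun ν => ?_
    by_cases hν : ν = μ
    · subst hν; exact le_sup_left
    · exact le_sup_of_le_right (le_iSup₂ (f := fun ν (_ : ν ≠ μ) => f.maxGenEigenspace ν) ν hν)
  have hcompl : IsCompl p q := ⟨hdis, codisjoint_iff.2 hcod⟩
  set π₀ : V →ₗ[ℂ] V := p.subtype ∘ₗ p.projectionOnto q hcompl with hπ₀
  have hleft : ∀ x ∈ p, π₀ x = x := by
    intro x hx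
    have := Submodule.linearProjOfIsCompl_apply_left hcompl ⟨x, hx⟩
    simp only [hπ₀, LinearMap.comp_apply, Submodule.coe_subtype]
    rw [this]
  have hright : ∀ x ∈ q, π₀ x = 0 := by
    intro x hx
    have := Submodule.projectionOnto_apply_of_mem_right hcompl hx
    simp only [hπ₀, LinearMap.comp_apply, Submodule.coe_subtype]
    rw [this, Submodule.coe_zero]
  have hqinv : ∀ x ∈ q, f x ∈ q := by
    intro x hx
    have hle : q ≤ Submodule.comap f q := by
      refine iSup₂_le fun ν hν => ?_
      have h1 : f.maxGenEigenspace ν ≤ Submodule.comap f (f.maxGenEigenspace ν) := by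
        intro y hy
        exact Module.End.mapsTo_maxGenEigenspace_of_comm (Commute.refl f) ν hy
      refine h1.trans (Submodule.comap_mono ?_)
      exact le_iSup₂ (f := fun ν (_ : ν ≠ μ) => f.maxGenEigenspace ν) ν hν
    exact hle hx
  have hpinv : ∀ x ∈ p, f x ∈ p := fun x hx =>
    Module.End.mapsTo_maxGenEigenspace_of_comm (Commute.refl f) μ hx
  have hcomm : ∀ x : V, π₀ (f x) = f (π₀ x) := by
    intro x
    have hxmem : x ∈ p ⊔ q := hcod ▸ Submodule.mem_top
    obtain ⟨a, ha, b, hb, rfl⟩ := Submodule.mem_sup.1 hxmem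
    rw [map_add, map_add, map_add, hleft a ha, hright b hb,
      hleft (f a) (hpinv a ha), hright (f b) (hqinv b hb)]
    rw [add_zero, add_zero]
  refine ⟨LinearMap.toContinuousLinearMap π₀, ?_, ?_, ?_⟩
  · intro x hx; simpa using hleft x hx
  · intro ν hν x hx
    have hxq : x ∈ q := le_iSup₂ (f := fun ν (_ : ν ≠ μ) => f.maxGenEigenspace ν) ν hν hx
    simpa using hright x hxq
  · intro x; simpa using hcomm x

theorem meMain [FiniteDimensional ℂ V] (f : Module.End ℂ V) (w : V) :
    (∃ x : V, Tendsto (avgME fun t => (f ^ t) w) atTop (nhds x))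
      ↔ (∃ C : ℝ, ∀ t : ℕ, ‖(f ^ t) w‖ ≤ C) := by
  classical
  obtain ⟨c, hc, hw⟩ : ∃ c : ℂ →₀ V, (∀ μ, c μ ∈ f.maxGenEigenspace μ)
      ∧ (c.sum fun _ x => x) = w := by
    have hmem : w ∈ ⨆ μ : ℂ, f.maxGenEigenspace μ := by
      rw [Module.End.iSup_maxGenEigenspace_eq_top f]; exact Submodule.mem_top
    exact (Submodule.mem_iSup_iff_exists_finsupp _ _).1 hmem
  have hkμ : ∀ μ, ∃ k : ℕ, ((f - μ • (1 : Module.End ℂ V)) ^ k) (c μ) = 0 := fun μ =>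
    (Module.End.mem_maxGenEigenspace f μ (c μ)).1 (hc μ)
  choose π hπ1 hπ2 hπ3 using fun μ : ℂ => exists_proj f μ
  have hπw : ∀ μ, π μ w = c μ := by
    intro μ
    rw [← hw, Finsupp.sum, map_sum]
    rw [Finset.sum_eq_single μ]
    · exact hπ1 μ (c μ) (hc μ)
    · intro ν _ hν
      exact hπ2 μ ν hν (c ν) (hc ν)
    · intro hμ
      rw [Finsupp.notMem_support_iff.1 hμ, map_zero]
  have hπpow : ∀ (μ : ℂ) (t : ℕ) (y : V), π μ ((f ^ t) y) = (f ^ t) (π μ y) := by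
    intro μ t
    induction t with
    | zero => intro y; simp
    | succ n ih =>
        intro y
        have h1 : (f ^ (n + 1)) y = f ((f ^ n) y) := by
          rw [pow_succ', Module.End.mul_apply]
        have h2 : (f ^ (n + 1)) (π μ y) = f ((f ^ n) (π μ y)) := by
          rw [pow_succ', Module.End.mul_apply]
        rw [h1, h2, hπ3, ih]
  have horbsum : ∀ t : ℕ, (f ^ t) w = ∑ μ ∈ c.support, (f ^ t) (c μ) := by
    intro t; rw [← hw, Finsupp.sum, map_sum]
  constructor
  · rintro ⟨x, hx⟩
    have hbd : ∀ μ, ∃ C : ℝ, ∀ t : ℕ, ‖(f ^ t) (c μ)‖ ≤ C := by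
      intro μ
      obtain ⟨k, hk⟩ := hkμ μ
      have hces : Tendsto (avgME fun t => (f ^ t) (c μ)) atTop (nhds (π μ x)) := by
        have := avgME_clm (π μ) _ hx
        refine this.congr fun t => ?_
        unfold avgME
        congr 1
        refine Finset.sum_congr rfl fun m _ => ?_
        show (π μ) ((f ^ m) w) = (f ^ m) (c μ)
        rw [hπpow μ m w, hπw μ]
      exact (cesaro_and_bounded_of_nice f hk (nice_of_cesaro f hk hces)).2
    choose C hC using hbd
    refine ⟨∑ μ ∈ c.support, C μ, fun t => ?_⟩
    rw [horbsum t]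
    exact (norm_sum_le _ _).trans (Finset.sum_le_sum fun μ _ => hC μ t)
  · rintro ⟨C, hC⟩
    have hces : ∀ μ, ∃ x : V, Tendsto (avgME fun t => (f ^ t) (c μ)) atTop (nhds x) := by
      intro μ
      obtain ⟨k, hk⟩ := hkμ μ
      have hbd : ∀ t : ℕ, ‖(f ^ t) (c μ)‖ ≤ ‖π μ‖ * C := by
        intro t
        have h1 : (f ^ t) (c μ) = π μ ((f ^ t) w) := by rw [hπpow μ t w, hπw μ]
        rw [h1]
        exact ((π μ).le_opNorm _).trans (mul_le_mul_of_nonneg_left (hC t) (norm_nonneg _))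
      exact (cesaro_and_bounded_of_nice f hk (nice_of_bounded f hk hbd)).1
    choose x hx using hces
    refine ⟨∑ μ ∈ c.support, x μ, ?_⟩
    have hsum : ∀ t : ℕ, avgME (fun t => (f ^ t) w) t
        = ∑ μ ∈ c.support, avgME (fun t => (f ^ t) (c μ)) t := by
      intro t
      unfold avgME
      have h1 : ∑ m ∈ Finset.Icc 1 t, (f ^ m) w
          = ∑ μ ∈ c.support, ∑ m ∈ Finset.Icc 1 t, (f ^ m) (c μ) := by
        rw [Finset.sum_congr rfl fun m _ => horbsum m]
        exact Finset.sum_comm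
      rw [h1, Finset.smul_sum]
    exact (tendsto_finset_sum c.support fun μ _ => hx μ).congr fun t => (hsum t).symm


end MeanErgodicAux

/-- A finite-dimensional evolution `(φ, v)` in a complex Banach space is
mean ergodic if and only if it is stable. -/
theorem meanErgodic_iff_stable_of_finiteDimensional
    {U : Type*} [NormedAddCommGroup U] [NormedSpace ℂ U] [CompleteSpace U]
    (φ : U →L[ℂ] U) (v : U)
    (hfd : FiniteDimensional ℂ (Submodule.span ℂ (Set.range fun t : ℕ => (φ ^ t) v))) :
    (∃ x : U, Tendsto (fun t : ℕ => (t : ℝ)⁻¹ • ∑ m ∈ Finset.Icc 1 t, (φ ^ m) v)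
        atTop (nhds x)) ↔
    (∃ c : ℝ, ∀ t : ℕ, ‖(φ ^ t) v‖ ≤ c * ‖v‖) := by
  classical
  set W := Submodule.span ℂ (Set.range fun t : ℕ => (φ ^ t) v) with hW
  have hWinv : ∀ x ∈ W, φ.toLinearMap x ∈ W := by
    have h1 : Submodule.map φ.toLinearMap W ≤ W := by
      rw [hW, Submodule.map_span, Submodule.span_le]
      rintro y ⟨_, ⟨t, rfl⟩, rfl⟩
      apply Submodule.subset_span
      refine ⟨t + 1, ?_⟩
      simp [pow_succ']
    intro x hx
    exact h1 (Submodule.mem_map_of_mem hx)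
  set f : Module.End ℂ W := φ.toLinearMap.restrict hWinv with hf
  have hvW : v ∈ W := Submodule.subset_span ⟨0, by simp⟩
  set w : W := ⟨v, hvW⟩ with hw
  have key : ∀ t : ℕ, (((f ^ t) w : W) : U) = (φ ^ t) v := by
    intro t
    induction t with
    | zero => simp [hw]
    | succ n ih =>
        have h1 : (f ^ (n + 1)) w = f ((f ^ n) w) := by
          rw [pow_succ', Module.End.mul_apply]
        have h2 : (φ ^ (n + 1)) v = φ ((φ ^ n) v) := by
          rw [pow_succ', ContinuousLinearMap.mul_apply]
        rw [h1, h2, ← ih, hf]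
        rfl
  have keyn : ∀ t : ℕ, ‖(f ^ t) w‖ = ‖(φ ^ t) v‖ := by
    intro t
    rw [← key t]
    rfl
  have keyavg : ∀ t : ℕ, ((avgME (fun t => (f ^ t) w) t : W) : U)
      = (t : ℝ)⁻¹ • ∑ m ∈ Finset.Icc 1 t, (φ ^ m) v := by
    intro t
    rw [avgME]
    push_cast [Submodule.coe_smul_of_tower, Submodule.coe_sum]
    congr 1
    exact Finset.sum_congr rfl fun m _ => by rw [key m]; exact congrFun (FunLike.coe_pow_eq_iterate φ m) v
  rw [show (∃ x : U, Tendsto (fun t : ℕ => (t : ℝ)⁻¹ • ∑ m ∈ Finset.Icc 1 t, (φ ^ m) v)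
        atTop (nhds x))
      ↔ (∃ y : W, Tendsto (avgME fun t => (f ^ t) w) atTop (nhds y)) from ?_, meMain f w]
  · constructor
    · rintro ⟨C, hC⟩
      by_cases hv : v = 0
      · refine ⟨0, fun t => ?_⟩
        subst hv
        simp
      · refine ⟨C / ‖v‖, fun t => ?_⟩
        rw [div_mul_cancel₀ C (norm_ne_zero_iff.2 hv)]
        rw [← keyn t]
        exact hC t
    · rintro ⟨c, hc⟩
      exact ⟨c * ‖v‖, fun t => by rw [keyn t]; exact hc t⟩
  · constructor
    · rintro ⟨x, hx⟩
      have hclosed : IsClosed (W : Set U) := Submodule.closed_of_finiteDimensional W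
      have hxW : x ∈ W := by
        refine hclosed.mem_of_tendsto hx ?_
        filter_upwards with t
        rw [← keyavg t]
        exact ((avgME (fun t => (f ^ t) w) t) : W).2
      refine ⟨⟨x, hxW⟩, ?_⟩
      rw [tendsto_subtype_rng]
      exact hx.congr fun t => (keyavg t).symm
    · rintro ⟨y, hy⟩
      refine ⟨(y : U), ?_⟩
      have := ((continuous_subtype_val).tendsto y).comp hy
      exact this.congr fun t => keyavg t
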